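/- For each k ∈ {1, 2, 3}, the sequence (d_k(p_i))_{i ≥ k−1} is unimodal: there is an index i* such that d_k(p_i) ≤ d_k(p_{i+1}) for all k−1 ≤ i < i* and d_k(p_i) ≥ d_k(p_{i+1}) for all i ≥ i*. -/

import Mathlib

/-- `pp i` is the `i`-th prime (`pp 0 = 2`, `pp 1 = 3`, `pp 2 = 5`, ...). -/
noncomputable def pp (i : ℕ) : ℕ := Nat.nth Nat.Prime i

/-- `PP i = p₀ · p₁ ⋯ p_i`, the product of the first `i+1` primes. -/
noncomputable def PP (i : ℕ) : ℕ := ∏ j ∈ Finset.range (i + 1), pp j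

/-- `del r i` is the density `δ_r(i)` of positive integers having exactly `r`
prime divisors among `p₀, ..., p_i`: the proportion of `x ∈ {1, ..., PP i}`
divisible by exactly `r` of the primes `p₀, ..., p_i`. -/
noncomputable def del (r i : ℕ) : ℚ :=
  (((Finset.Icc 1 (PP i)).filter
      (fun x => ((Finset.range (i + 1)).filter (fun j => pp j ∣ x)).card = r)).card : ℚ) /
    (PP i : ℚ)

/-- `dd k i` is the density `d_k(p_i)` of positive integers whose `k`-th smallest
prime factor is `p_i`: the proportion of `x ∈ {1, ..., PP i}` divisible by `p_i`
and by exactly `k-1` of the primes `p₀, ..., p_{i-1}`. -/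
noncomputable def dd (k i : ℕ) : ℚ :=
  (((Finset.Icc 1 (PP i)).filter
      (fun x => pp i ∣ x ∧
        ((Finset.range i).filter (fun j => pp j ∣ x)).card = k - 1)).card : ℚ) /
    (PP i : ℚ)

/- ### Auxiliary development -/

lemma pp_prime (i : ℕ) : (pp i).Prime := Nat.prime_nth_prime i

lemma pp_pos (i : ℕ) : 0 < pp i := (pp_prime i).pos

lemma pp_lt_pp {i j : ℕ} (h : i < j) : pp i < pp j :=
  (Nat.nth_lt_nth Nat.infinite_setOf_prime).2 h

lemma pp_zero : pp 0 = 2 := by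
  have := Nat.nth_count (p := Nat.Prime) (n := 2) (by norm_num)
  simpa [pp, show Nat.count Nat.Prime 2 = 0 by decide] using this

lemma pp_one : pp 1 = 3 := by
  have := Nat.nth_count (p := Nat.Prime) (n := 3) (by norm_num)
  simpa [pp, show Nat.count Nat.Prime 3 = 1 by decide] using this

lemma pp_coprime {i j : ℕ} (h : i ≠ j) : Nat.Coprime (pp i) (pp j) := by
  refine (Nat.coprime_primes (pp_prime i) (pp_prime j)).2 ?_
  intro he
  rcases lt_or_gt_of_ne h with hl | hl
  · exact absurd he (Nat.ne_of_lt (pp_lt_pp hl))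
  · exact absurd he.symm (Nat.ne_of_lt (pp_lt_pp hl))

/-- Product of the first `i` primes. -/
noncomputable def QQ (i : ℕ) : ℕ := ∏ j ∈ Finset.range i, pp j

lemma QQ_pos (i : ℕ) : 0 < QQ i := Finset.prod_pos fun j _ => pp_pos j

lemma QQ_succ (i : ℕ) : QQ (i + 1) = QQ i * pp i := Finset.prod_range_succ _ _

lemma PP_eq (i : ℕ) : PP i = QQ (i + 1) := rfl

lemma pp_dvd_QQ {j i : ℕ} (h : j < i) : pp j ∣ QQ i :=
  Finset.dvd_prod_of_mem _ (Finset.mem_range.2 h)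

lemma QQ_coprime (i : ℕ) : Nat.Coprime (QQ i) (pp i) :=
  Nat.Coprime.prod_left fun j hj => pp_coprime (Nat.ne_of_lt (Finset.mem_range.1 hj))

/-- Number of primes among `p₀,...,p_{i-1}` dividing `x`. -/
noncomputable def cnt (i x : ℕ) : ℕ := ((Finset.range i).filter (fun j => pp j ∣ x)).card

/-- Count of `x ∈ [1, QQ i]` divisible by exactly `r` of `p₀,...,p_{i-1}`. -/
noncomputable def m (r i : ℕ) : ℕ :=
  ((Finset.Icc 1 (QQ i)).filter (fun x => cnt i x = r)).card

lemma cnt_succ (i x : ℕ) :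
    cnt (i + 1) x = cnt i x + (if pp i ∣ x then 1 else 0) := by
  unfold cnt
  rw [Finset.range_add_one, Finset.filter_insert]
  by_cases h : pp i ∣ x
  · rw [if_pos h, if_pos h, Finset.card_insert_of_notMem (by simp)]
  · rw [if_neg h, if_neg h, Nat.add_zero]

lemma cnt_add_QQ (i x : ℕ) : cnt i (x + QQ i) = cnt i x := by
  unfold cnt
  congr 1
  apply Finset.filter_congr
  intro j hj
  have h := pp_dvd_QQ (Finset.mem_range.1 hj)
  constructor
  · intro hd
    have hs := Nat.dvd_sub hd h
    simpa using hs
  · intro hd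
    exact Nat.dvd_add hd h

lemma cnt_mul_pp (i y : ℕ) : cnt i (y * pp i) = cnt i y := by
  unfold cnt
  congr 1
  apply Finset.filter_congr
  intro j hj
  have hcop : Nat.Coprime (pp j) (pp i) := pp_coprime (Nat.ne_of_lt (Finset.mem_range.1 hj))
  exact ⟨fun h => hcop.dvd_of_dvd_mul_right h, fun h => h.mul_right _⟩

/-- A predicate with period `n` is invariant under `% n`. -/
lemma mod_iff_of_period {n : ℕ} (P : ℕ → Prop) (hP : ∀ x, P (x + n) ↔ P x) (x : ℕ) :
    P (x % n) ↔ P x := by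
  conv_rhs => rw [← Nat.mod_add_div x n]
  generalize x / n = q
  induction q with
  | zero => simp
  | succ q ih =>
      rw [Nat.mul_succ, ← Nat.add_assoc, hP (x % n + n * q)]
      exact ih

lemma card_Icc_filter_eq_range {n : ℕ} (hn : 0 < n) (P : ℕ → Prop) [DecidablePred P]
    (hP : ∀ x, P (x + n) ↔ P x) :
    ((Finset.Icc 1 n).filter P).card = ((Finset.range n).filter P).card := by
  have h1 : Finset.Icc 1 n = insert n (Finset.Ico 1 n) := by
    ext x; simp [Finset.mem_Icc, Finset.mem_Ico]; omega
  have h2 : Finset.range n = insert 0 (Finset.Ico 1 n) := by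
    ext x; simp [Finset.mem_range, Finset.mem_Ico]; omega
  have hn0 : P n ↔ P 0 := by simpa using hP 0
  rw [h1, h2, Finset.filter_insert, Finset.filter_insert]
  by_cases h : P 0
  · rw [if_pos (hn0.2 h), if_pos h,
      Finset.card_insert_of_notMem (by simp),
      Finset.card_insert_of_notMem (by simp)]
  · rw [if_neg (fun hh => h (hn0.1 hh)), if_neg h]

/-- CRT counting: for coprime periods, counts multiply. -/
lemma card_filter_range_mul (a b : ℕ) (ha : 0 < a) (hb : 0 < b) (hab : Nat.Coprime a b)
    (P Q : ℕ → Prop) [DecidablePred P] [DecidablePred Q]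
    (hP : ∀ x, P (x + a) ↔ P x) (hQ : ∀ x, Q (x + b) ↔ Q x) :
    ((Finset.range (a * b)).filter (fun x => P x ∧ Q x)).card
      = ((Finset.range a).filter P).card * ((Finset.range b).filter Q).card := by
  have hPm : ∀ x, P (x % a) ↔ P x := mod_iff_of_period P hP
  have hQm : ∀ x, Q (x % b) ↔ Q x := mod_iff_of_period Q hQ
  rw [← Finset.card_product, ← Finset.filter_product]
  apply Finset.card_nbij' (i := fun x => (x % a, x % b))
      (j := fun z => (Nat.chineseRemainder hab z.1 z.2 : ℕ) % (a * b))
  · intro x hx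
    simp only [Finset.mem_coe, Finset.mem_filter, Finset.mem_range] at hx
    simp only [Finset.mem_coe, Finset.mem_filter, Finset.mem_product, Finset.mem_range]
    exact ⟨⟨Nat.mod_lt _ ha, Nat.mod_lt _ hb⟩, (hPm x).2 hx.2.1, (hQm x).2 hx.2.2⟩
  · rintro ⟨u, v⟩ hz
    simp only [Finset.mem_coe, Finset.mem_filter, Finset.mem_product, Finset.mem_range] at hz
    obtain ⟨⟨hu, hv⟩, hPu, hQv⟩ := hz
    set c := Nat.chineseRemainder hab u v with hc
    have hca : (c : ℕ) % a = u := by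
      have := c.2.1
      unfold Nat.ModEq at this
      rw [this, Nat.mod_eq_of_lt hu]
    have hcb : (c : ℕ) % b = v := by
      have := c.2.2
      unfold Nat.ModEq at this
      rw [this, Nat.mod_eq_of_lt hv]
    have h1 : ((c : ℕ) % (a * b)) % a = u := by
      rw [Nat.mod_mod_of_dvd _ (dvd_mul_right a b), hca]
    have h2 : ((c : ℕ) % (a * b)) % b = v := by
      rw [Nat.mod_mod_of_dvd _ (dvd_mul_left b a), hcb]
    simp only [Finset.mem_coe, Finset.mem_filter, Finset.mem_range]
    refine ⟨Nat.mod_lt _ (Nat.mul_pos ha hb), ?_, ?_⟩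
    · rw [← hPm ((c : ℕ) % (a * b)), h1]; exact hPu
    · rw [← hQm ((c : ℕ) % (a * b)), h2]; exact hQv
  · intro x hx
    simp only [Finset.mem_coe, Finset.mem_filter, Finset.mem_range] at hx
    set c := Nat.chineseRemainder hab (x % a) (x % b) with hc
    have hma : (c : ℕ) ≡ x [MOD a] := c.2.1.trans (Nat.mod_modEq x a)
    have hmb : (c : ℕ) ≡ x [MOD b] := c.2.2.trans (Nat.mod_modEq x b)
    have hmab : (c : ℕ) ≡ x [MOD a * b] :=
      (Nat.modEq_and_modEq_iff_modEq_mul hab).1 ⟨hma, hmb⟩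
    have : (c : ℕ) % (a * b) = x % (a * b) := hmab
    beta_reduce
    rw [this, Nat.mod_eq_of_lt hx.1]
  · rintro ⟨u, v⟩ hz
    simp only [Finset.mem_coe, Finset.mem_filter, Finset.mem_product, Finset.mem_range] at hz
    obtain ⟨⟨hu, hv⟩, hPu, hQv⟩ := hz
    set c := Nat.chineseRemainder hab u v with hc
    have hca : (c : ℕ) % a = u := by
      have := c.2.1; unfold Nat.ModEq at this; rw [this, Nat.mod_eq_of_lt hu]
    have hcb : (c : ℕ) % b = v := by
      have := c.2.2; unfold Nat.ModEq at this; rw [this, Nat.mod_eq_of_lt hv]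
    have h1 : ((c : ℕ) % (a * b)) % a = u := by
      rw [Nat.mod_mod_of_dvd _ (dvd_mul_right a b), hca]
    have h2 : ((c : ℕ) % (a * b)) % b = v := by
      rw [Nat.mod_mod_of_dvd _ (dvd_mul_left b a), hcb]
    exact Prod.ext h1 h2

lemma m_eq_range (r i : ℕ) :
    m r i = ((Finset.range (QQ i)).filter (fun x => cnt i x = r)).card :=
  card_Icc_filter_eq_range (QQ_pos i) _ (fun x => by rw [cnt_add_QQ])

lemma card_dvd_range (i : ℕ) :
    ((Finset.range (pp i)).filter (fun x => pp i ∣ x)).card = 1 := by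
  have : (Finset.range (pp i)).filter (fun x => pp i ∣ x) = {0} := by
    ext x
    simp only [Finset.mem_filter, Finset.mem_range, Finset.mem_singleton]
    constructor
    · rintro ⟨h1, h2⟩
      by_contra hne
      exact absurd (Nat.le_of_dvd (Nat.pos_of_ne_zero hne) h2) (by omega)
    · rintro rfl; exact ⟨pp_pos i, dvd_zero _⟩
  rw [this]; simp

lemma card_not_dvd_range (i : ℕ) :
    ((Finset.range (pp i)).filter (fun x => ¬ pp i ∣ x)).card = pp i - 1 := by
  have h := Finset.card_filter_add_card_filter_not
    (s := Finset.range (pp i)) (p := fun x => pp i ∣ x)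
  rw [card_dvd_range] at h
  simp only [Finset.card_range] at h
  omega

lemma m_rec (r i : ℕ) :
    m r (i + 1) = (pp i - 1) * m r i
      + (if r = 0 then 0 else m (r - 1) i) := by
  rw [m_eq_range]
  have hsplit : (Finset.range (QQ (i + 1))).filter (fun x => cnt (i + 1) x = r)
      = (Finset.range (QQ (i + 1))).filter (fun x => cnt i x = r ∧ ¬ pp i ∣ x)
        ∪ (Finset.range (QQ (i + 1))).filter (fun x => cnt i x + 1 = r ∧ pp i ∣ x) := by
    rw [← Finset.filter_or]
    apply Finset.filter_congr
    intro x _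
    rw [cnt_succ]
    by_cases h : pp i ∣ x <;> simp [h] <;> omega
  rw [hsplit, Finset.card_union_of_disjoint]
  · have e1 : ((Finset.range (QQ (i + 1))).filter (fun x => cnt i x = r ∧ ¬ pp i ∣ x)).card
        = m r i * (pp i - 1) := by
      rw [QQ_succ,
        card_filter_range_mul (QQ i) (pp i) (QQ_pos i) (pp_pos i) (QQ_coprime i)
          (fun x => cnt i x = r) (fun x => ¬ pp i ∣ x)
          (fun x => by simp only [cnt_add_QQ])
          (fun x => by simp),
        ← m_eq_range, card_not_dvd_range]
    have e2 : ((Finset.range (QQ (i + 1))).filter (fun x => cnt i x + 1 = r ∧ pp i ∣ x)).card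
        = if r = 0 then 0 else m (r - 1) i := by
      rcases r with _ | s
      · simp
      · rw [if_neg (Nat.succ_ne_zero s), Nat.succ_sub_one]
        have hfc : (Finset.range (QQ (i + 1))).filter (fun x => cnt i x + 1 = s + 1 ∧ pp i ∣ x)
            = (Finset.range (QQ (i + 1))).filter (fun x => cnt i x = s ∧ pp i ∣ x) := by
          apply Finset.filter_congr
          intro x _
          constructor <;> rintro ⟨h1, h2⟩ <;> exact ⟨by omega, h2⟩
        rw [hfc, QQ_succ,
          card_filter_range_mul (QQ i) (pp i) (QQ_pos i) (pp_pos i) (QQ_coprime i)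
            (fun x => cnt i x = s) (fun x => pp i ∣ x)
            (fun x => by simp only [cnt_add_QQ])
            (fun x => by simp),
          ← m_eq_range, card_dvd_range, mul_one]
    rw [e1, e2, Nat.mul_comm]
  · rw [Finset.disjoint_left]
    intro x h1 h2
    simp only [Finset.mem_filter] at h1 h2
    exact h1.2.2 h2.2.2

lemma m_base (r : ℕ) : m r 0 = if r = 0 then 1 else 0 := by
  have hq : QQ 0 = 1 := by simp [QQ]
  have hc : cnt 0 1 = 0 := by simp [cnt]
  unfold m
  rw [hq, Finset.Icc_self, Finset.filter_singleton, hc]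
  by_cases h : r = 0 <;> simp [h, eq_comm]

lemma m_0_1 : m 0 1 = 1 := by
  rw [m_rec]; simp [m_base, pp_zero]

lemma m_1_1 : m 1 1 = 1 := by
  rw [m_rec]; simp [m_base, pp_zero]

lemma m_1_2 : m 1 2 = 3 := by
  rw [m_rec]; simp [m_0_1, m_1_1, pp_one]

lemma m_2_1 : m 2 1 = 0 := by
  rw [m_rec]; simp [m_base, pp_zero]

lemma m_2_2 : m 2 2 = 1 := by
  rw [m_rec]; simp [m_1_1, m_2_1, pp_one]

lemma m0_le_m1 : ∀ i, 1 ≤ i → m 0 i ≤ m 1 i := by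
  intro i hi
  induction i, hi using Nat.le_induction with
  | base => rw [m_0_1, m_1_1]
  | succ n hn ih =>
      rw [m_rec, m_rec, if_pos rfl, if_neg Nat.one_ne_zero]
      have h1 : (pp n - 1) * m 0 n ≤ (pp n - 1) * m 1 n := Nat.mul_le_mul_left _ ih
      omega

lemma m1_le_3m2 : ∀ i, 2 ≤ i → m 1 i ≤ 3 * m 2 i := by
  intro i hi
  induction i, hi using Nat.le_induction with
  | base => rw [m_1_2, m_2_2]
  | succ n hn ih =>
      have h01 := m0_le_m1 n (by omega)
      rw [m_rec, m_rec, if_neg Nat.one_ne_zero, if_neg (by norm_num : (2:ℕ) ≠ 0)]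
      have h1 : (pp n - 1) * m 1 n ≤ (pp n - 1) * (3 * m 2 n) := Nat.mul_le_mul_left _ ih
      have h2 : (pp n - 1) * (3 * m 2 n) = 3 * ((pp n - 1) * m 2 n) := by ring
      have e1 : m (1 - 1) n = m 0 n := rfl
      have e2 : m (2 - 1) n = m 1 n := rfl
      rw [e1, e2]
      omega

lemma pp_succ_ge (i : ℕ) : pp i + 1 ≤ pp (i + 1) := pp_lt_pp (Nat.lt_succ_self i)

lemma pp_succ_ge_two (i : ℕ) (hi : 1 ≤ i) : pp i + 2 ≤ pp (i + 1) := by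
  have h1 : pp i < pp (i + 1) := pp_lt_pp (Nat.lt_succ_self i)
  have h2 : 2 < pp i := by
    have := pp_lt_pp (show 0 < i by omega)
    rwa [pp_zero] at this
  have oi : Odd (pp i) := (pp_prime i).odd_of_ne_two (by omega)
  have oi1 : Odd (pp (i + 1)) := (pp_prime (i + 1)).odd_of_ne_two (by omega)
  rcases oi with ⟨a, ha⟩
  rcases oi1 with ⟨b, hb⟩
  omega

/-- Key step inequalities in ℕ. -/
lemma m_step_0 (i : ℕ) : m 0 (i + 1) ≤ pp (i + 1) * m 0 i := by
  rw [m_rec]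
  simp only [if_pos rfl, Nat.add_zero]
  exact Nat.mul_le_mul_right _ (by have := pp_succ_ge i; omega)

lemma m_step_1 (i : ℕ) (hi : 1 ≤ i) : m 1 (i + 1) ≤ pp (i + 1) * m 1 i := by
  rw [m_rec]
  simp only [if_neg Nat.one_ne_zero]
  have h01 := m0_le_m1 i hi
  have hp := pp_succ_ge i
  have hpp := pp_pos i
  have hsub : pp i - 1 + 1 = pp i := Nat.succ_pred_eq_of_pos hpp
  calc (pp i - 1) * m 1 i + m 0 i ≤ (pp i - 1) * m 1 i + m 1 i := by omega
    _ = (pp i - 1 + 1) * m 1 i := by ring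
    _ = pp i * m 1 i := by rw [hsub]
    _ ≤ pp (i + 1) * m 1 i := Nat.mul_le_mul_right _ (by omega)

lemma m_step_2 (i : ℕ) (hi : 2 ≤ i) : m 2 (i + 1) ≤ pp (i + 1) * m 2 i := by
  rw [m_rec]
  simp only [if_neg (by norm_num : (2:ℕ) ≠ 0), Nat.succ_sub_one]
  have h12 := m1_le_3m2 i hi
  have hp := pp_succ_ge_two i (by omega)
  have hpp := pp_pos i
  calc (pp i - 1) * m 2 i + m 1 i ≤ (pp i - 1) * m 2 i + 3 * m 2 i := by omega
    _ = (pp i + 2) * m 2 i := by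
        have : pp i - 1 + 3 = pp i + 2 := by omega
        rw [← this]; ring
    _ ≤ pp (i + 1) * m 2 i := Nat.mul_le_mul_right _ hp

/-- The numerator of `dd` equals `m (k-1) i`. -/
lemma dd_card (k i : ℕ) :
    ((Finset.Icc 1 (PP i)).filter
      (fun x => pp i ∣ x ∧
        ((Finset.range i).filter (fun j => pp j ∣ x)).card = k - 1)).card = m (k - 1) i := by
  unfold m
  symm
  apply Finset.card_nbij' (i := fun y => y * pp i) (j := fun x => x / pp i)
  · intro y hy
    simp only [Finset.mem_coe, Finset.mem_filter, Finset.mem_Icc] at hy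
    obtain ⟨⟨hy1, hy2⟩, hyc⟩ := hy
    simp only [Finset.mem_coe, Finset.mem_filter, Finset.mem_Icc]
    refine ⟨⟨?_, ?_⟩, dvd_mul_left _ _, ?_⟩
    · exact Nat.one_le_iff_ne_zero.2 (Nat.mul_ne_zero (by omega) (pp_pos i).ne')
    · rw [PP_eq, QQ_succ]; exact Nat.mul_le_mul_right _ hy2
    · show cnt i (y * pp i) = k - 1
      rw [cnt_mul_pp]; exact hyc
  · intro x hx
    simp only [Finset.mem_coe, Finset.mem_filter, Finset.mem_Icc] at hx
    obtain ⟨⟨hx1, hx2⟩, hdvd, hxc⟩ := hx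
    obtain ⟨y, rfl⟩ := hdvd
    beta_reduce
    rw [Nat.mul_div_cancel_left _ (pp_pos i)]
    simp only [Finset.mem_coe, Finset.mem_filter, Finset.mem_Icc]
    rw [PP_eq, QQ_succ] at hx2
    refine ⟨⟨?_, ?_⟩, ?_⟩
    · rcases Nat.eq_zero_or_pos y with rfl | h
      · simp at hx1
      · exact h
    · have := Nat.mul_le_mul_left (pp i) (le_refl y)
      nlinarith [pp_pos i, hx2]
    · show cnt i y = k - 1
      rw [← cnt_mul_pp i y]
      rw [show y * pp i = pp i * y by ring]
      exact hxc
  · intro y _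
    exact Nat.mul_div_cancel _ (pp_pos i)
  · intro x hx
    simp only [Finset.mem_coe, Finset.mem_filter, Finset.mem_Icc] at hx
    exact Nat.div_mul_cancel hx.2.1

lemma PP_pos (i : ℕ) : 0 < PP i := by rw [PP_eq]; exact QQ_pos _

lemma dd_eq (k i : ℕ) : dd k i = (m (k - 1) i : ℚ) / (PP i : ℚ) := by
  unfold dd
  rw [dd_card]

lemma dd_mono (k i : ℕ) (h : m (k - 1) (i + 1) ≤ pp (i + 1) * m (k - 1) i) :
    dd k (i + 1) ≤ dd k i := by
  rw [dd_eq, dd_eq]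
  have hp0 : (0:ℚ) < (PP i : ℚ) := by exact_mod_cast PP_pos i
  have hp1 : (0:ℚ) < (PP (i + 1) : ℚ) := by exact_mod_cast PP_pos (i + 1)
  rw [div_le_div_iff₀ hp1 hp0]
  have hPP : (PP (i + 1) : ℚ) = (PP i : ℚ) * (pp (i + 1) : ℚ) := by
    rw [PP_eq, PP_eq, QQ_succ]
    push_cast
    ring
  calc (m (k - 1) (i + 1) : ℚ) * (PP i : ℚ)
      ≤ ((pp (i + 1) * m (k - 1) i : ℕ) : ℚ) * (PP i : ℚ) := by
        apply mul_le_mul_of_nonneg_right _ hp0.le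
        exact_mod_cast h
    _ = (m (k - 1) i : ℚ) * (PP (i + 1) : ℚ) := by
        rw [hPP]; push_cast; ring

/-- For each `k ∈ {1,2,3}`, the sequence `(d_k(p_i))_{i ≥ k−1}` is unimodal: there is
`i*` with `d_k(p_i) ≤ d_k(p_{i+1})` for `k−1 ≤ i < i*`, and `d_k(p_i) ≥ d_k(p_{i+1})`
for `i ≥ i*` (with `i ≥ k−1`). -/
theorem dd_unimodal_for_small_k (k : ℕ) (hk : k = 1 ∨ k = 2 ∨ k = 3) :
    ∃ istar : ℕ,
      (∀ i : ℕ, k - 1 ≤ i → i < istar → dd k i ≤ dd k (i + 1)) ∧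
      (∀ i : ℕ, k - 1 ≤ i → istar ≤ i → dd k (i + 1) ≤ dd k i) := by
  refine ⟨0, fun i _ h => absurd h (by omega), fun i hk1 _ => ?_⟩
  apply dd_mono
  rcases hk with rfl | rfl | rfl
  · simpa using m_step_0 i
  · simpa using m_step_1 i (by omega)
  · simpa using m_step_2 i (by omega)
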